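/- Let G be a graph, T a tree, f : G → T a graph homomorphism, n ≥ 1 an integer, and η a multi-homomorphism from G to T such that d_T(f(z), y) ≤ 2n for every z ∈ V(G) and every y ∈ η(z). Let (x,x′) ∈ E(G) be an edge with u_η(x) = u_η(x′) = 2n. Then the following are equivalent: (1) η(x) is a singleton {y}, and for every y′ ∈ η(x′) with d_T(f(x′), y′) = 2n the unique path in T from f(x′) to y′ contains y; (2) there exist y ∈ η(x) and y′ ∈ η(x′) with d_T(f(x), y) = d_T(f(x′), y′) = 2n such that the unique path in T from f(x′) to y′ contains y. -/

import Mathlib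

structure Graph' where
  V : Type
  E : V → V → Prop
  symm : ∀ {x y}, E x y → E y x

def IsGraphHom (G H : Graph') (f : G.V → H.V) : Prop :=
  ∀ {x y}, G.E x y → H.E (f x) (f y)

structure Walk (G : Graph') (a b : G.V) where
  len : ℕ
  toFun : ℕ → G.V
  start_eq : toFun 0 = a
  end_eq : toFun len = b
  adj : ∀ i, i < len → G.E (toFun i) (toFun (i + 1))

structure MultiHom (G H : Graph') where
  toFun : G.V → Set H.V
  nonempty : ∀ x, (toFun x).Nonempty
  edge : ∀ {x y}, G.E x y → ∀ a ∈ toFun x, ∀ b ∈ toFun y, H.E a b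

def MultiHom.le {G H : Graph'} (η η' : MultiHom G H) : Prop :=
  ∀ x, η.toFun x ⊆ η'.toFun x

def SameComponent {G H : Graph'} (η η' : MultiHom G H) : Prop :=
  Relation.ReflTransGen (fun a b => MultiHom.le a b ∨ MultiHom.le b a) η η'

def ofHom {G H : Graph'} (f : G.V → H.V) (hf : IsGraphHom G H f) : MultiHom G H where
  toFun x := {f x}
  nonempty x := ⟨f x, rfl⟩
  edge := by
    intro x y hxy a ha b hb
    rw [Set.mem_singleton_iff] at ha hb
    subst ha; subst hb
    exact hf hxy

def prodI (G : Graph') (n : ℕ) : Graph' where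
  V := G.V × Fin (n + 1)
  E := fun p q => G.E p.1 q.1 ∧ p.2.val ≤ q.2.val + 1 ∧ q.2.val ≤ p.2.val + 1
  symm := by
    rintro p q ⟨h1, h2, h3⟩
    exact ⟨G.symm h1, h3, h2⟩

def MoveA {G : Graph'} {a b : G.V} (γ δ : Walk G a b) : Prop :=
  δ.len = γ.len + 2 ∧ ∃ k ≤ γ.len,
    (∀ i ≤ k, δ.toFun i = γ.toFun i) ∧
    (∀ i, k ≤ i → i ≤ γ.len → δ.toFun (i + 2) = γ.toFun i)

def MoveB {G : Graph'} {a b : G.V} (γ δ : Walk G a b) : Prop :=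
  γ.len = δ.len ∧ ∃ j, ∀ i ≤ γ.len, i ≠ j → γ.toFun i = δ.toFun i

def Eqv1 {G : Graph'} {a b : G.V} : Walk G a b → Walk G a b → Prop :=
  Relation.EqvGen MoveA

def Eqv2 {G : Graph'} {a b : G.V} : Walk G a b → Walk G a b → Prop :=
  Relation.EqvGen (fun γ δ => MoveA γ δ ∨ MoveB γ δ)

noncomputable def Graph'.dist (G : Graph') (a b : G.V) : ℕ :=
  sInf {n | ∃ γ : Walk G a b, γ.len = n}

def Graph'.Connected (G : Graph') : Prop := ∀ a b : G.V, Nonempty (Walk G a b)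

def Graph'.Bipartite (G : Graph') : Prop :=
  ∃ c : G.V → ZMod 2, ∀ {x y}, G.E x y → c x ≠ c y

def constWalk {G : Graph'} (a : G.V) : Walk G a a :=
  ⟨0, fun _ => a, rfl, rfl, fun i hi => absurd hi (by omega)⟩

def Walk.concat {G : Graph'} {a b c : G.V} (γ : Walk G a b) (δ : Walk G b c) :
    Walk G a c where
  len := γ.len + δ.len
  toFun i := if i ≤ γ.len then γ.toFun i else δ.toFun (i - γ.len)
  start_eq := by simp [γ.start_eq]
  end_eq := by
    by_cases h : δ.len = 0
    · have hbc : b = c := by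
        have h1 := δ.end_eq
        rw [h, δ.start_eq] at h1
        exact h1
      simp [h, γ.end_eq, hbc]
    · have h1 : ¬ (γ.len + δ.len ≤ γ.len) := by omega
      try dsimp only
      rw [if_neg h1]
      have h2 : γ.len + δ.len - γ.len = δ.len := by omega
      rw [h2, δ.end_eq]
  adj := by
    intro i hi
    try dsimp only
    rcases lt_trichotomy i γ.len with h | h | h
    · rw [if_pos (by omega : i ≤ γ.len), if_pos (by omega : i + 1 ≤ γ.len)]
      exact γ.adj i h
    · have hδ : 0 < δ.len := by omega
      rw [if_pos (by omega : i ≤ γ.len), if_neg (by omega : ¬ i + 1 ≤ γ.len)]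
      have h2 : i + 1 - γ.len = 1 := by omega
      rw [h2, h, γ.end_eq]
      have h3 := δ.adj 0 hδ
      rw [δ.start_eq] at h3
      exact h3
    · rw [if_neg (by omega : ¬ i ≤ γ.len), if_neg (by omega : ¬ i + 1 ≤ γ.len)]
      have h2 : i + 1 - γ.len = (i - γ.len) + 1 := by omega
      rw [h2]
      exact δ.adj (i - γ.len) (by omega)

def Walk.reverse {G : Graph'} {a b : G.V} (γ : Walk G a b) : Walk G b a where
  len := γ.len
  toFun i := γ.toFun (γ.len - i)
  start_eq := by simp [γ.end_eq]
  end_eq := by simp [γ.start_eq]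
  adj := by
    intro i hi
    have h1 : γ.len - i = (γ.len - (i + 1)) + 1 := by omega
    have h2 := γ.adj (γ.len - (i + 1)) (by omega)
    rw [← h1] at h2
    exact G.symm h2

def Walk.map {G H : Graph'} (f : G.V → H.V) (hf : IsGraphHom G H f) {a b : G.V}
    (γ : Walk G a b) : Walk H (f a) (f b) where
  len := γ.len
  toFun i := f (γ.toFun i)
  start_eq := by (try dsimp only); rw [γ.start_eq]
  end_eq := by (try dsimp only); rw [γ.end_eq]
  adj := fun i hi => hf (γ.adj i hi)

def Walk.pow {G : Graph'} {a : G.V} (γ : Walk G a a) : ℕ → Walk G a a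
  | 0 => constWalk a
  | n + 1 => (Walk.pow γ n).concat γ

def Walk.zpow {G : Graph'} {a : G.V} (γ : Walk G a a) : ℤ → Walk G a a
  | Int.ofNat n => γ.pow n
  | Int.negSucc n => γ.reverse.pow (n + 1)
def finClip (n t : ℕ) : Fin (n + 1) := ⟨min t n, by omega⟩

def realizedWalk {G H : Graph'} {n : ℕ} (h : (prodI G n).V → H.V)
    (hh : IsGraphHom (prodI G n) H h) {v v' : G.V} (hvv' : G.E v v')
    {w : H.V} (h0 : h (v, finClip n 0) = w) (hN : h (v, finClip n n) = w) :
    Walk H w w where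
  len := 2 * n
  toFun i := if i % 2 = 0 then h (v, finClip n (i / 2)) else h (v', finClip n (i / 2))
  start_eq := by
    try dsimp only
    rw [if_pos (by norm_num : (0:ℕ) % 2 = 0), Nat.zero_div]
    exact h0
  end_eq := by
    try dsimp only
    rw [if_pos (by omega : (2 * n) % 2 = 0)]
    have h2 : 2 * n / 2 = n := by omega
    rw [h2]
    exact hN
  adj := by
    intro i hi
    try dsimp only
    rcases Nat.even_or_odd i with he | ho
    · obtain ⟨t, ht⟩ := he
      rw [if_pos (by omega : i % 2 = 0), if_neg (by omega : ¬ (i + 1) % 2 = 0)]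
      have h4 : (i + 1) / 2 = i / 2 := by omega
      rw [h4]
      refine hh ⟨hvv', ?_, ?_⟩ <;> ((try dsimp only); omega)
    · obtain ⟨t, ht⟩ := ho
      rw [if_neg (by omega : ¬ i % 2 = 0), if_pos (by omega : (i + 1) % 2 = 0)]
      refine hh ⟨G.symm hvv', ?_, ?_⟩ <;> (dsimp only [finClip]; omega)

def Realizable {G H : Graph'} (f : G.V → H.V) (v : G.V) (ω : Walk H (f v) (f v)) : Prop :=
  ∃ (n : ℕ) (h : (prodI G n).V → H.V) (hh : IsGraphHom (prodI G n) H h)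
    (hs : ∀ x, h (x, finClip n 0) = f x) (he : ∀ x, h (x, finClip n n) = f x)
    (v' : G.V) (_ : G.E v v'),
    Eqv2 ω (realizedWalk h hh ‹G.E v v'› (hs v) (he v))
def SquareFree (G : Graph') : Prop :=
  (∀ x, ¬ G.E x x) ∧
  ¬ ∃ a b c d : G.V, a ≠ b ∧ a ≠ c ∧ a ≠ d ∧ b ≠ c ∧ b ≠ d ∧ c ≠ d ∧
    G.E a b ∧ G.E b c ∧ G.E c d ∧ G.E d a

def nbhd (G : Graph') (v : G.V) : Set G.V := {y | G.E v y}

def nbhd2 (G : Graph') (v : G.V) : Set G.V := {z | ∃ y, G.E v y ∧ G.E y z}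

def IsGraphCovering (G H : Graph') (p : G.V → H.V) : Prop :=
  IsGraphHom G H p ∧ ∀ v : G.V, Set.BijOn p (nbhd G v) (nbhd H (p v))

def Is2CoveringMap (G H : Graph') (p : G.V → H.V) : Prop :=
  IsGraphHom G H p ∧ ∀ v : G.V,
    Set.BijOn p (nbhd G v) (nbhd H (p v)) ∧ Set.BijOn p (nbhd2 G v) (nbhd2 H (p v))

def pushforward {G H1 H2 : Graph'} (p : H1.V → H2.V) (hp : IsGraphHom H1 H2 p)
    (η : MultiHom G H1) : MultiHom G H2 where
  toFun x := p '' η.toFun x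
  nonempty x := (η.nonempty x).image p
  edge := by
    rintro x y hxy a ⟨a', ha', rfl⟩ b ⟨b', hb', rfl⟩
    exact hp (η.edge hxy a' ha' b' hb')

def IsCycleWalk {G : Graph'} {a : G.V} (γ : Walk G a a) : Prop :=
  3 ≤ γ.len ∧ ∀ i j, i < γ.len → j < γ.len → γ.toFun i = γ.toFun j → i = j

def IsTree (T : Graph') : Prop :=
  (∀ x, ¬ T.E x x) ∧ (∀ a b : T.V, Nonempty (Walk T a b)) ∧
    ∀ (a : T.V) (γ : Walk T a a), ¬ IsCycleWalk γ

def IsPath {G : Graph'} {a b : G.V} (γ : Walk G a b) : Prop :=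
  ∀ i j, i ≤ γ.len → j ≤ γ.len → γ.toFun i = γ.toFun j → i = j

def OnWalk {G : Graph'} {a b : G.V} (γ : Walk G a b) (y : G.V) : Prop :=
  ∃ i ≤ γ.len, γ.toFun i = y

def CrossHomotopic (G H : Graph') (f g : G.V → H.V) : Prop :=
  ∃ (n : ℕ) (h : (prodI G n).V → H.V), IsGraphHom (prodI G n) H h ∧
    (∀ x, h (x, finClip n 0) = f x) ∧ (∀ x, h (x, finClip n n) = g x)

def quotGraph (G : Graph') (Γ : Type) [Group Γ] [MulAction Γ G.V] : Graph' where
  V := Quotient (MulAction.orbitRel Γ G.V)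
  E := fun α β => ∃ x y : G.V, Quotient.mk (MulAction.orbitRel Γ G.V) x = α ∧
        Quotient.mk (MulAction.orbitRel Γ G.V) y = β ∧ G.E x y
  symm := by
    rintro α β ⟨x, y, hx, hy, hxy⟩
    exact ⟨y, x, hy, hx, G.symm hxy⟩
section TreeAux

variable {T : Graph'}

/-- Walk consisting of a single edge. -/
def edgeWalk {a b : T.V} (h : T.E a b) : Walk T a b where
  len := 1
  toFun i := if i = 0 then a else b
  start_eq := by simp
  end_eq := by simp
  adj := by
    intro i hi
    have : i = 0 := by omega
    subst this
    simpa using h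

/-- Segment of a walk between indices i and j. -/
def Walk.seg {a b : T.V} (γ : Walk T a b) (i j : ℕ) (hij : i ≤ j) (hj : j ≤ γ.len) :
    Walk T (γ.toFun i) (γ.toFun j) where
  len := j - i
  toFun t := γ.toFun (i + t)
  start_eq := rfl
  end_eq := by
    show γ.toFun (i + (j - i)) = γ.toFun j
    have : i + (j - i) = j := by omega
    rw [this]
  adj := fun t ht => γ.adj (i + t) (by omega)

/-- Transport endpoints of a walk along equalities. -/
def Walk.copy {a b a' b' : T.V} (γ : Walk T a b) (ha : a = a') (hb : b = b') :
    Walk T a' b' where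
  len := γ.len
  toFun := γ.toFun
  start_eq := ha ▸ γ.start_eq
  end_eq := hb ▸ γ.end_eq
  adj := γ.adj

lemma dist_le_len {a b : T.V} (γ : Walk T a b) : T.dist a b ≤ γ.len :=
  Nat.sInf_le ⟨γ, rfl⟩

lemma exists_geo (hT : IsTree T) (a b : T.V) : ∃ γ : Walk T a b, γ.len = T.dist a b := by
  have hne : {n | ∃ γ : Walk T a b, γ.len = n}.Nonempty :=
    ⟨(Classical.choice (hT.2.1 a b)).len, Classical.choice (hT.2.1 a b), rfl⟩
  exact Nat.sInf_mem hne

lemma Tdist_self (a : T.V) : T.dist a a = 0 :=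
  Nat.le_zero.mp (dist_le_len (constWalk a))

lemma Tdist_triangle (hT : IsTree T) (a b c : T.V) :
    T.dist a c ≤ T.dist a b + T.dist b c := by
  obtain ⟨γ, hγ⟩ := exists_geo hT a b
  obtain ⟨δ, hδ⟩ := exists_geo hT b c
  have := dist_le_len (γ.concat δ)
  simpa [Walk.concat, hγ, hδ] using this

lemma dist_edge (hT : IsTree T) {a b : T.V} (h : T.E a b) : T.dist a b = 1 := by
  have h1 : T.dist a b ≤ 1 := by simpa [edgeWalk] using dist_le_len (edgeWalk h)
  have h2 : T.dist a b ≠ 0 := by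
    intro h0
    obtain ⟨γ, hγ⟩ := exists_geo hT a b
    rw [h0] at hγ
    have hab : a = b := by
      have e1 := γ.start_eq
      have e2 := γ.end_eq
      rw [hγ] at e2
      rw [e1] at e2
      exact e2
    subst hab
    exact hT.1 a h
  omega

/-- Positions on a geodesic realize distances. -/
lemma geo_pos (hT : IsTree T) {a b : T.V} (γ : Walk T a b) (hγ : γ.len = T.dist a b)
    {i : ℕ} (hi : i ≤ γ.len) :
    T.dist a (γ.toFun i) = i ∧ T.dist (γ.toFun i) b = γ.len - i := by
  have h1 : T.dist a (γ.toFun i) ≤ i := by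
    have := dist_le_len ((γ.seg 0 i (Nat.zero_le i) hi).copy γ.start_eq rfl)
    simpa [Walk.seg, Walk.copy] using this
  have h2 : T.dist (γ.toFun i) b ≤ γ.len - i := by
    have := dist_le_len ((γ.seg i γ.len hi le_rfl).copy rfl γ.end_eq)
    simpa [Walk.seg, Walk.copy] using this
  have h3 := Tdist_triangle hT a (γ.toFun i) b
  omega

lemma geo_isPath (hT : IsTree T) {a b : T.V} (γ : Walk T a b)
    (hγ : γ.len = T.dist a b) : IsPath γ := by
  intro i j hi hj hij
  have h1 := (geo_pos hT γ hγ hi).1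
  have h2 := (geo_pos hT γ hγ hj).1
  rw [hij] at h1
  omega

/-- There is no "function cycle" in a tree. -/
lemma noCycleFn (hT : IsTree T) (L : ℕ) (hL : 3 ≤ L) (g : ℕ → T.V)
    (hadj : ∀ p, p < L → T.E (g p) (g (p + 1)))
    (hclose : g L = g 0)
    (hinj : ∀ p q, p < L → q < L → g p = g q → p = q) : False := by
  exact hT.2.2 (g 0) ⟨L, g, rfl, hclose, hadj⟩ ⟨hL, hinj⟩

/-- Uniqueness of geodesics in a tree. -/
lemma geo_unique (hT : IsTree T) {a b : T.V} (γ δ : Walk T a b)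
    (hγ : γ.len = T.dist a b) (hδ : δ.len = T.dist a b)
    {i : ℕ} (hi : i ≤ γ.len) : γ.toFun i = δ.toFun i := by
  by_contra hne
  set k := T.dist a b with hk
  have hγk : γ.len = k := hγ
  have hδk : δ.len = k := hδ
  -- set of indices up to which the walks agree
  set S : Set ℕ := {m | m ≤ k ∧ ∀ j ≤ m, γ.toFun j = δ.toFun j} with hS
  have hS0 : 0 ∈ S := by
    refine ⟨Nat.zero_le _, fun j hj => ?_⟩
    have : j = 0 := by omega
    subst this
    rw [γ.start_eq, δ.start_eq]
  have hbdd : BddAbove S := ⟨k, fun m hm => hm.1⟩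
  set m := sSup S with hm
  have hmS : m ∈ S := Nat.sSup_mem ⟨0, hS0⟩ hbdd
  have hmax : ∀ p ∈ S, p ≤ m := fun p hp => le_csSup hbdd hp
  have hmi : m < i := by
    by_contra hmi
    exact hne (hmS.2 i (by omega))
  have hik : i ≤ k := by omega
  -- first index above m where walks meet again
  set S' : Set ℕ := {p | m < p ∧ p ≤ k ∧ γ.toFun p = δ.toFun p} with hS'
  have hkS' : k ∈ S' := by
    refine ⟨by omega, le_rfl, ?_⟩
    have e1 := γ.end_eq
    have e2 := δ.end_eq
    rw [hγk] at e1; rw [hδk] at e2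
    rw [e1, e2]
  set m' := sInf S' with hm'
  have hm'S : m' ∈ S' := Nat.sInf_mem ⟨k, hkS'⟩
  have hm'k : m' ≤ k := hm'S.2.1
  have hmin : ∀ p, m < p → p < m' → γ.toFun p ≠ δ.toFun p := by
    intro p h1 h2 heq
    have : m' ≤ p := Nat.sInf_le ⟨h1, by omega, heq⟩
    omega
  have hm'm : m < m' := hm'S.1
  have hm2 : m + 2 ≤ m' := by
    rcases Nat.lt_or_ge (m + 1) m' with h | h
    · omega
    · have hm1 : m' = m + 1 := by omega
      have : m + 1 ∈ S := by
        refine ⟨by omega, fun j hj => ?_⟩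
        rcases Nat.lt_or_ge j (m + 1) with h' | h'
        · exact hmS.2 j (by omega)
        · have : j = m + 1 := by omega
          subst this
          have := hm'S.2.2
          rwa [hm1] at this
      have := hmax _ this
      omega
  -- distances of positions
  have hγpos : ∀ t ≤ k, T.dist a (γ.toFun t) = t := fun t ht =>
    (geo_pos hT γ hγ (i := t) (by omega)).1
  have hδpos : ∀ t ≤ k, T.dist a (δ.toFun t) = t := fun t ht =>
    (geo_pos hT δ hδ (i := t) (by omega)).1
  -- build the cycle
  set L := 2 * (m' - m) with hL
  set g : ℕ → T.V := fun p => if p ≤ m' - m then γ.toFun (m + p)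
    else δ.toFun (2 * m' - m - p) with hg
  refine noCycleFn hT L (by omega) g ?_ ?_ ?_
  · intro p hp
    rcases Nat.lt_or_ge p (m' - m) with h | h
    · have e1 : g p = γ.toFun (m + p) := if_pos (by omega)
      have e2 : g (p + 1) = γ.toFun (m + (p + 1)) := if_pos (by omega)
      rw [e1, e2]
      exact γ.adj (m + p) (by omega)
    · rcases Nat.eq_or_lt_of_le h with h' | h'
      · have e1 : g p = γ.toFun m' := by
          rw [hg]
          simp only
          rw [if_pos (by omega : p ≤ m' - m)]
          congr 1
          omega
        have e2 : g (p + 1) = δ.toFun (m' - 1) := by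
          rw [hg]
          simp only
          rw [if_neg (by omega : ¬ p + 1 ≤ m' - m)]
          congr 1
          omega
        rw [e1, e2, hm'S.2.2]
        have := δ.adj (m' - 1) (by omega)
        have e3 : m' - 1 + 1 = m' := by omega
        rw [e3] at this
        exact T.symm this
      · have e1 : g p = δ.toFun (2 * m' - m - p) := if_neg (by omega)
        have e2 : g (p + 1) = δ.toFun (2 * m' - m - (p + 1)) := if_neg (by omega)
        rw [e1, e2]
        have := δ.adj (2 * m' - m - (p + 1)) (by omega)
        have e3 : 2 * m' - m - (p + 1) + 1 = 2 * m' - m - p := by omega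
        rw [e3] at this
        exact T.symm this
  · have e1 : g L = δ.toFun m := by
      rw [hg]
      simp only
      rw [if_neg (by omega : ¬ L ≤ m' - m)]
      congr 1
      omega
    have e2 : g 0 = γ.toFun m := by
      rw [hg]
      simp only
      rw [if_pos (Nat.zero_le _)]
      congr 1
    rw [e1, e2, hmS.2 m le_rfl]
  · intro p q hp hq hpq
    simp only [hg] at hpq
    rcases le_or_gt p (m' - m) with h1 | h1 <;> rcases le_or_gt q (m' - m) with h2 | h2
    · rw [if_pos h1, if_pos h2] at hpq
      have d1 := hγpos (m + p) (by omega)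
      have d2 := hγpos (m + q) (by omega)
      rw [hpq] at d1
      omega
    · rw [if_pos h1, if_neg (by omega)] at hpq
      have d1 := hγpos (m + p) (by omega)
      have d2 := hδpos (2 * m' - m - q) (by omega)
      rw [hpq] at d1
      have heqi : m + p = 2 * m' - m - q := by omega
      rw [← heqi] at hpq
      exact absurd hpq (hmin (m + p) (by omega) (by omega))
    · rw [if_neg (by omega), if_pos h2] at hpq
      have d1 := hδpos (2 * m' - m - p) (by omega)
      have d2 := hγpos (m + q) (by omega)
      rw [← hpq] at d2
      have heqi : m + q = 2 * m' - m - p := by omega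
      rw [← heqi] at hpq
      exact absurd hpq.symm (hmin (m + q) (by omega) (by omega))
    · rw [if_neg (by omega), if_neg (by omega)] at hpq
      have d1 := hδpos (2 * m' - m - p) (by omega)
      have d2 := hδpos (2 * m' - m - q) (by omega)
      rw [hpq] at d1
      omega

/-- Geodesics from a common origin that meet, agree below the meeting point. -/
lemma agree_downward (hT : IsTree T) {a u v : T.V} (γ : Walk T a u) (δ : Walk T a v)
    (hγ : γ.len = T.dist a u) (hδ : δ.len = T.dist a v)
    {i : ℕ} (hiγ : i ≤ γ.len) (hiδ : i ≤ δ.len)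
    (hagree : γ.toFun i = δ.toFun i) :
    ∀ j ≤ i, γ.toFun j = δ.toFun j := by
  intro j hj
  have d1 := (geo_pos hT γ hγ hiγ).1
  have d2 := (geo_pos hT δ hδ hiδ).1
  set γ' : Walk T a (γ.toFun i) := (γ.seg 0 i (Nat.zero_le i) hiγ).copy γ.start_eq rfl
  set δ' : Walk T a (γ.toFun i) := (δ.seg 0 i (Nat.zero_le i) hiδ).copy δ.start_eq hagree.symm
  have hγ' : γ'.len = T.dist a (γ.toFun i) := by
    simp [γ', Walk.seg, Walk.copy, d1]
  have hδ' : δ'.len = T.dist a (γ.toFun i) := by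
    simp [δ', Walk.seg, Walk.copy, d1]
  have := geo_unique hT γ' δ' hγ' hδ' (i := j) (by simp [γ', Walk.seg, Walk.copy]; omega)
  simpa [γ', δ', Walk.seg, Walk.copy] using this

/-- In a tree, adjacent vertices are at different distances from any vertex. -/
lemma adj_dist_ne (hT : IsTree T) {a u v : T.V} (huv : T.E u v) :
    T.dist a u ≠ T.dist a v := by
  intro heq
  have huv' : u ≠ v := by
    intro h; subst h; exact hT.1 u huv
  set k := T.dist a u with hk
  obtain ⟨P, hP⟩ := exists_geo hT a u
  obtain ⟨Q, hQ⟩ := exists_geo hT a v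
  have hPk : P.len = k := hP
  have hQk : Q.len = k := by rw [hQ, ← heq]
  set S : Set ℕ := {m | m ≤ k ∧ ∀ j ≤ m, P.toFun j = Q.toFun j} with hS
  have hS0 : 0 ∈ S := by
    refine ⟨Nat.zero_le _, fun j hj => ?_⟩
    have : j = 0 := by omega
    subst this
    rw [P.start_eq, Q.start_eq]
  have hbdd : BddAbove S := ⟨k, fun m hm => hm.1⟩
  set m := sSup S with hm
  have hmS : m ∈ S := Nat.sSup_mem ⟨0, hS0⟩ hbdd
  have hmax : ∀ p ∈ S, p ≤ m := fun p hp => le_csSup hbdd hp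
  have hmk : m < k := by
    rcases Nat.lt_or_ge m k with h | h
    · exact h
    · exfalso
      have hk' : k ≤ m := by omega
      have := hmS.2 k hk'
      have e1 := P.end_eq; rw [hPk] at e1
      have e2 := Q.end_eq; rw [hQk] at e2
      rw [e1, e2] at this
      exact huv' this
  have hnomerge : ∀ p, m < p → p ≤ k → P.toFun p ≠ Q.toFun p := by
    intro p h1 h2 heq'
    have := agree_downward hT P Q hP hQ (i := p) (by omega) (by omega) heq'
    have : p ∈ S := ⟨h2, this⟩
    have := hmax p this
    omega
  have hPpos : ∀ t ≤ k, T.dist a (P.toFun t) = t := fun t ht =>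
    (geo_pos hT P hP (i := t) (by omega)).1
  have hQpos : ∀ t ≤ k, T.dist a (Q.toFun t) = t := fun t ht =>
    (geo_pos hT Q (by rw [hQ]) (i := t) (by omega)).1
  set L := 2 * (k - m) + 1 with hL
  set g : ℕ → T.V := fun p => if p ≤ k - m then P.toFun (m + p)
    else Q.toFun (2 * k - m + 1 - p) with hg
  refine noCycleFn hT L (by omega) g ?_ ?_ ?_
  · intro p hp
    rcases Nat.lt_or_ge p (k - m) with h | h
    · have e1 : g p = P.toFun (m + p) := if_pos (by omega)
      have e2 : g (p + 1) = P.toFun (m + (p + 1)) := if_pos (by omega)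
      rw [e1, e2]
      exact P.adj (m + p) (by omega)
    · rcases Nat.eq_or_lt_of_le h with h' | h'
      · -- p = k - m : edge u ~ v
        have e1 : g p = P.toFun k := by
          rw [hg]; simp only
          rw [if_pos (by omega : p ≤ k - m)]
          congr 1; omega
        have e2 : g (p + 1) = Q.toFun k := by
          rw [hg]; simp only
          rw [if_neg (by omega : ¬ p + 1 ≤ k - m)]
          congr 1; omega
        have eP := P.end_eq; rw [hPk] at eP
        have eQ := Q.end_eq; rw [hQk] at eQ
        rw [e1, e2, eP, eQ]
        exact huv
      · have e1 : g p = Q.toFun (2 * k - m + 1 - p) := if_neg (by omega)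
        have e2 : g (p + 1) = Q.toFun (2 * k - m + 1 - (p + 1)) := if_neg (by omega)
        rw [e1, e2]
        have := Q.adj (2 * k - m + 1 - (p + 1)) (by omega)
        have e3 : 2 * k - m + 1 - (p + 1) + 1 = 2 * k - m + 1 - p := by omega
        rw [e3] at this
        exact T.symm this
  · have e1 : g L = Q.toFun m := by
      rw [hg]; simp only
      rw [if_neg (by omega : ¬ L ≤ k - m)]
      congr 1; omega
    have e2 : g 0 = P.toFun m := by
      rw [hg]; simp only
      rw [if_pos (Nat.zero_le _)]
      congr 1
    rw [e1, e2, hmS.2 m le_rfl]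
  · intro p q hp hq hpq
    simp only [hg] at hpq
    rcases le_or_gt p (k - m) with h1 | h1 <;> rcases le_or_gt q (k - m) with h2 | h2
    · rw [if_pos h1, if_pos h2] at hpq
      have d1 := hPpos (m + p) (by omega)
      have d2 := hPpos (m + q) (by omega)
      rw [hpq] at d1
      omega
    · rw [if_pos h1, if_neg (by omega)] at hpq
      have d1 := hPpos (m + p) (by omega)
      have d2 := hQpos (2 * k - m + 1 - q) (by omega)
      rw [hpq] at d1
      have heqi : m + p = 2 * k - m + 1 - q := by omega
      rw [← heqi] at hpq
      exact absurd hpq (hnomerge (m + p) (by omega) (by omega))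
    · rw [if_neg (by omega), if_pos h2] at hpq
      have d1 := hQpos (2 * k - m + 1 - p) (by omega)
      have d2 := hPpos (m + q) (by omega)
      rw [← hpq] at d2
      have heqi : m + q = 2 * k - m + 1 - p := by omega
      rw [← heqi] at hpq
      exact absurd hpq.symm (hnomerge (m + q) (by omega) (by omega))
    · rw [if_neg (by omega), if_neg (by omega)] at hpq
      have d1 := hQpos (2 * k - m + 1 - p) (by omega)
      have d2 := hQpos (2 * k - m + 1 - q) (by omega)
      rw [hpq] at d1
      omega

/-- Uniqueness of the predecessor: two neighbours of w at distance one less from a coincide. -/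
lemma unique_pred (hT : IsTree T) {a w u u' : T.V} (hu : T.E u w) (hu' : T.E u' w)
    (h1 : T.dist a u + 1 = T.dist a w) (h2 : T.dist a u' + 1 = T.dist a w) :
    u = u' := by
  obtain ⟨P, hP⟩ := exists_geo hT a u
  obtain ⟨P', hP'⟩ := exists_geo hT a u'
  set Q : Walk T a w := P.concat (edgeWalk hu) with hQdef
  set Q' : Walk T a w := P'.concat (edgeWalk hu') with hQ'def
  have hQ : Q.len = T.dist a w := by
    simp only [hQdef, Walk.concat, edgeWalk]
    omega
  have hQ' : Q'.len = T.dist a w := by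
    simp only [hQ'def, Walk.concat, edgeWalk]
    omega
  have hk : T.dist a u = T.dist a u' := by omega
  have := geo_unique hT Q Q' hQ hQ' (i := T.dist a u)
    (by simp only [hQdef, Walk.concat, edgeWalk]; omega)
  have eQ : Q.toFun (T.dist a u) = u := by
    simp only [hQdef, Walk.concat]
    rw [if_pos (by omega : T.dist a u ≤ P.len)]
    have := P.end_eq
    rw [hP] at this
    exact this
  have eQ' : Q'.toFun (T.dist a u) = u' := by
    simp only [hQ'def, Walk.concat]
    rw [if_pos (by omega : T.dist a u ≤ P'.len)]
    have e := P'.end_eq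
    rw [hP'] at e
    rw [hk]
    exact e
  rw [eQ, eQ'] at this
  exact this

/-- In a tree, any injective walk is a geodesic. -/
lemma path_len (hT : IsTree T) :
    ∀ (ℓ : ℕ) {a b : T.V} (P : Walk T a b), IsPath P → P.len = ℓ → T.dist a b = ℓ := by
  intro ℓ
  induction ℓ with
  | zero =>
    intro a b P _ hlen
    have e1 := P.start_eq
    have e2 := P.end_eq
    rw [hlen] at e2
    rw [e1] at e2
    rw [← e2]
    exact Tdist_self a
  | succ ℓ IH =>
    intro a b P hpath hlen
    set c := P.toFun ℓ with hc
    set P' : Walk T a c := (P.seg 0 ℓ (Nat.zero_le ℓ) (by omega)).copy P.start_eq rfl with hP'def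
    have hP'path : IsPath P' := by
      intro i j hi hj hij
      simp only [hP'def, Walk.seg, Walk.copy] at hi hj hij
      have := hpath (0 + i) (0 + j) (by omega) (by omega) hij
      omega
    have hP'len : P'.len = ℓ := by
      simp [hP'def, Walk.seg, Walk.copy]
    have hdc : T.dist a c = ℓ := IH P' hP'path hP'len
    have hcb : T.E c b := by
      have := P.adj ℓ (by omega)
      have e := P.end_eq
      rw [hlen] at e
      rw [e] at this
      exact this
    have hub : T.dist a b ≤ ℓ + 1 := by
      have := dist_le_len P
      omega
    have hlb : ℓ ≤ T.dist a b + 1 := by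
      have h3 := Tdist_triangle hT a b c
      have h4 : T.dist b c = 1 := dist_edge hT (T.symm hcb)
      omega
    have hne : T.dist a b ≠ ℓ := fun h => adj_dist_ne hT (a := a) hcb (by omega)
    rcases Nat.lt_or_ge (T.dist a b) ℓ with h | h
    · -- dist a b = ℓ - 1, contradiction with injectivity
      exfalso
      have hℓ1 : 1 ≤ ℓ := by omega
      have hdb : T.dist a b = ℓ - 1 := by omega
      have hgeoP' : P'.len = T.dist a c := by omega
      have hd2 : T.dist a (P'.toFun (ℓ - 1)) = ℓ - 1 :=
        (geo_pos hT P' hgeoP' (by omega)).1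
      have hadj2 : T.E (P'.toFun (ℓ - 1)) c := by
        have := P.adj (ℓ - 1) (by omega)
        have e3 : ℓ - 1 + 1 = ℓ := by omega
        rw [e3] at this
        simpa [hP'def, Walk.seg, Walk.copy] using this
      have hbP : b = P'.toFun (ℓ - 1) :=
        unique_pred hT (a := a) (T.symm hcb) hadj2 (by omega) (by omega)
      have e4 : P'.toFun (ℓ - 1) = P.toFun (ℓ - 1) := by
        simp [hP'def, Walk.seg, Walk.copy]
      rw [e4] at hbP
      have e5 := P.end_eq
      rw [hlen] at e5
      have := hpath (ℓ + 1) (ℓ - 1) (by omega) (by omega) (e5.trans hbP)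
      omega
    · omega

end TreeAux
theorem statement_6 (G T : Graph') (hT : IsTree T)
    (f : G.V → T.V) (hf : IsGraphHom G T f) (n : ℕ) (hn : 1 ≤ n)
    (η : MultiHom G T)
    (hbound : ∀ z : G.V, ∀ y ∈ η.toFun z, T.dist (f z) y ≤ 2 * n)
    (x x' : G.V) (hxx' : G.E x x')
    (hux : ∃ y ∈ η.toFun x, T.dist (f x) y = 2 * n)
    (hux' : ∃ y ∈ η.toFun x', T.dist (f x') y = 2 * n) :
    (∃ y : T.V, η.toFun x = {y} ∧
      ∀ y' ∈ η.toFun x', T.dist (f x') y' = 2 * n →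
        ∀ P : Walk T (f x') y', IsPath P → OnWalk P y) ↔
    (∃ y ∈ η.toFun x, ∃ y' ∈ η.toFun x',
      T.dist (f x) y = 2 * n ∧ T.dist (f x') y' = 2 * n ∧
      ∀ P : Walk T (f x') y', IsPath P → OnWalk P y) := by
  constructor
  · rintro ⟨y, hηx, hall⟩
    obtain ⟨y0, hy0, hd0⟩ := hux
    obtain ⟨y', hy', hd'⟩ := hux'
    have hy0y : y0 = y := by rw [hηx] at hy0; exact hy0
    subst hy0y
    exact ⟨y0, hy0, y', hy', hd0, hd', fun P hP => hall y' hy' hd' P hP⟩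
  · rintro ⟨y, hy, y', hy', hdy, hdy', hPall⟩
    have hloop := hT.1
    have hfxx' : T.E (f x) (f x') := hf hxx'
    have hfne : f x ≠ f x' := fun h => hloop (f x) (h ▸ hfxx')
    have hyy' : T.E y y' := η.edge hxx' y hy y' hy'
    have hyne : y ≠ y' := fun h => hloop y (h ▸ hyy')
    have dxx' : T.dist (f x) (f x') = 1 := dist_edge hT hfxx'
    have dyy' : T.dist y y' = 1 := dist_edge hT hyy'
    set d := T.dist (f x) y' with hd_def
    have hd_le : d ≤ 2 * n + 1 := by
      have := Tdist_triangle hT (f x) (f x') y'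
      omega
    -- Claim : d = 2n + 1
    have hd : d = 2 * n + 1 := by
      by_contra hcon
      have hdle : d ≤ 2 * n := by omega
      obtain ⟨γ, hγ⟩ := exists_geo hT (f x) y'
      have hγlen : γ.len = d := hγ
      set Q : Walk T (f x') y' := (edgeWalk (T.symm hfxx')).concat γ with hQdef
      have hQlen : Q.len = 1 + d := by
        simp only [hQdef, Walk.concat, edgeWalk]
        omega
      have hQfun : ∀ p, 1 ≤ p → Q.toFun p = γ.toFun (p - 1) := by
        intro p hp
        simp only [hQdef, Walk.concat, edgeWalk]
        rcases Nat.eq_or_lt_of_le hp with h | h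
        · simp only [if_pos (by omega : p ≤ 1), if_neg (by omega : ¬ p = 0)]
          have e : p - 1 = 0 := by omega
          rw [e, γ.start_eq]
        · exact if_neg (by omega : ¬ p ≤ 1)
      have hQ0 : Q.toFun 0 = f x' := Q.start_eq
      have hγpos : ∀ t, t ≤ d → T.dist (f x) (γ.toFun t) = t ∧
          T.dist (γ.toFun t) y' = d - t := by
        intro t ht
        have h := geo_pos hT γ hγ (i := t) (by omega)
        exact ⟨h.1, by rw [← hγlen]; exact h.2⟩
      have hQpath : IsPath Q := by
        intro i j hi hj hij
        rw [hQlen] at hi hj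
        rcases Nat.eq_zero_or_pos i with hi0 | hi1 <;>
          rcases Nat.eq_zero_or_pos j with hj0 | hj1
        · omega
        · exfalso
          subst hi0
          rw [hQ0, hQfun j (by omega)] at hij
          have h2 := (hγpos (j - 1) (by omega)).2
          rw [← hij] at h2
          have hj1' : j = 1 ∧ d = 2 * n := by omega
          obtain ⟨hj1'', hdn⟩ := hj1'
          have e : j - 1 = 0 := by omega
          rw [e, γ.start_eq] at hij
          exact hfne hij.symm
        · exfalso
          subst hj0
          rw [hQ0, hQfun i (by omega)] at hij
          have h2 := (hγpos (i - 1) (by omega)).2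
          rw [hij] at h2
          have hi1' : i = 1 ∧ d = 2 * n := by omega
          obtain ⟨hi1'', hdn⟩ := hi1'
          have e : i - 1 = 0 := by omega
          rw [e, γ.start_eq] at hij
          exact hfne hij
        · rw [hQfun i (by omega), hQfun j (by omega)] at hij
          have h1 := (hγpos (i - 1) (by omega)).1
          have h2 := (hγpos (j - 1) (by omega)).1
          rw [hij] at h1
          omega
      obtain ⟨p, hp, hQp⟩ := hPall Q hQpath
      rw [hQlen] at hp
      rcases Nat.eq_zero_or_pos p with hp0 | hp1
      · subst hp0
        rw [hQ0] at hQp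
        rw [← hQp] at hdy
        rw [dxx'] at hdy
        omega
      · rw [hQfun p (by omega)] at hQp
        have h1 := (hγpos (p - 1) (by omega)).1
        rw [hQp] at h1
        rw [hdy] at h1
        have hpd : p - 1 = d := by omega
        have e := γ.end_eq
        rw [hγlen] at e
        rw [← hpd] at e
        rw [hQp] at e
        exact hyne e
    -- η x = {y}
    have hsingle : ∀ z ∈ η.toFun x, z = y := by
      intro z hz
      have hzy' : T.E z y' := η.edge hxx' z hz y' hy'
      have hdz_le : T.dist (f x) z ≤ 2 * n := hbound x z hz
      have hdz1 : T.dist z y' = 1 := dist_edge hT hzy'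
      have htri : d ≤ T.dist (f x) z + T.dist z y' := Tdist_triangle hT (f x) z y'
      have hdz : T.dist (f x) z = 2 * n := by omega
      exact unique_pred hT (a := f x) hzy' hyy' (by omega) (by omega)
    have hηx : η.toFun x = {y} := Set.eq_singleton_iff_unique_mem.mpr ⟨hy, hsingle⟩
    -- dist (f x') y = 2n - 1
    obtain ⟨R, hR⟩ := exists_geo hT (f x') y'
    have hRlen : R.len = 2 * n := by rw [hR, ← hdy']
    have hRpath : IsPath R := geo_isPath hT R hR
    obtain ⟨i, hi, hRi⟩ := hPall R hRpath
    have hpos := geo_pos hT R hR (i := i) hi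
    rw [hRi] at hpos
    have hfy : T.dist (f x') y = 2 * n - 1 := by
      have h1 := hpos.1
      have h2 := hpos.2
      rw [dyy'] at h2
      omega
    refine ⟨y, hηx, ?_⟩
    intro y'' hy'' hdy'' P hPpath
    have hyy'' : T.E y y'' := η.edge hxx' y hy y'' hy''
    have hPlen : P.len = 2 * n := by
      have := path_len hT P.len P hPpath rfl
      omega
    have hPgeo : P.len = T.dist (f x') y'' := by omega
    have hw := (geo_pos hT P hPgeo (i := 2 * n - 1) (by omega)).1
    have hadjw : T.E (P.toFun (2 * n - 1)) y'' := by
      have h := P.adj (2 * n - 1) (by omega)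
      have e3 : 2 * n - 1 + 1 = 2 * n := by omega
      rw [e3] at h
      have e := P.end_eq
      rw [hPlen] at e
      rw [e] at h
      exact h
    have heq := unique_pred hT (a := f x') hyy'' hadjw (by omega) (by omega)
    exact ⟨2 * n - 1, by omega, heq.symm⟩
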